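/- Strict monotonicity of the weighted correlation under shrinkage (core of Lemma 2): let w ∈ ℝⁿ be nonnegative and nonzero, and let x ∈ ℝⁿ be nonnegative and not a scalar multiple of w. For γ ≥ 0 with x(j) > γ·w(j) for all j, define f(γ) = wᵀ(x − γw)/‖x − γw‖₂. Then for all 0 ≤ γ₁ < γ₂ such that x(j) > γ₂·w(j) for all j, one has f(γ₂) < f(γ₁). -/

import Mathlib

open scoped RealInnerProductSpace


/-- The ℓ₁ norm of a vector in ℝⁿ. -/
noncomputable def l1norm {n : ℕ} (x : Fin n → ℝ) : ℝ := ∑ j, |x j|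

/-- The ℓ₂ norm of a vector in ℝⁿ. -/
noncomputable def l2norm {n : ℕ} (x : Fin n → ℝ) : ℝ := Real.sqrt (∑ j, (x j) ^ 2)

/-- The sparsity measure spar(x) = (√n − ‖x‖₁/‖x‖₂)/(√n − 1). -/
noncomputable def spar {n : ℕ} (x : Fin n → ℝ) : ℝ :=
  (Real.sqrt n - l1norm x / l2norm x) / (Real.sqrt n - 1)


/-- Strict monotonicity of the weighted correlation under shrinkage: with w ≥ 0
nonzero, x ≥ 0 not a scalar multiple of w, and f(γ) = wᵀ(x − γw)/‖x − γw‖₂, one has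
f(γ₂) < f(γ₁) for all 0 ≤ γ₁ < γ₂ with x(j) > γ₂·w(j) for all j. -/
theorem weighted_corr_strict_decreasing {n : ℕ} (w x : Fin n → ℝ)
    (hw : ∀ j, 0 ≤ w j) (hw0 : w ≠ 0) (hx : ∀ j, 0 ≤ x j)
    (hxw : ∀ c : ℝ, x ≠ c • w)
    (γ₁ γ₂ : ℝ) (h0 : 0 ≤ γ₁) (h12 : γ₁ < γ₂) (hdom : ∀ j, γ₂ * w j < x j) :
    (∑ j, w j * (x j - γ₂ * w j)) / l2norm (fun j => x j - γ₂ * w j) <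
      (∑ j, w j * (x j - γ₁ * w j)) / l2norm (fun j => x j - γ₁ * w j) := by
  obtain ⟨j0, hj0⟩ : ∃ j, 0 < w j := by
    by_contra h
    push_neg at h
    exact hw0 (funext fun j => le_antisymm (h j) (hw j))
  set δ := γ₂ - γ₁ with hδ
  have hδpos : 0 < δ := sub_pos.mpr h12
  set a : Fin n → ℝ := fun j => x j - γ₁ * w j with ha
  set b : Fin n → ℝ := fun j => x j - γ₂ * w j with hb
  have hbpos : ∀ j, 0 < b j := fun j => sub_pos.mpr (hdom j)
  have hapos : ∀ j, 0 < a j := fun j => lt_of_lt_of_le (hbpos j) (by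
    simp only [ha, hb]; nlinarith [hw j, h12.le])
  set B := ∑ j, (w j)^2 with hB
  set S₁ := ∑ j, w j * a j with hS₁
  set S₂ := ∑ j, w j * b j with hS₂
  set N₁ := l2norm a with hN₁
  set N₂ := l2norm b with hN₂
  have hBpos : 0 < B :=
    Finset.sum_pos' (fun j _ => sq_nonneg _) ⟨j0, Finset.mem_univ _, by positivity⟩
  have hS₂pos : 0 < S₂ :=
    Finset.sum_pos' (fun j _ => mul_nonneg (hw j) (hbpos j).le)
      ⟨j0, Finset.mem_univ _, mul_pos hj0 (hbpos j0)⟩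
  have hSrel : S₂ = S₁ - δ * B := by
    simp only [hS₂, hS₁, hB, Finset.mul_sum, ← Finset.sum_sub_distrib]
    exact Finset.sum_congr rfl fun j _ => by simp only [ha, hb, hδ]; ring
  have hS₁pos : 0 < S₁ := by nlinarith
  have hN₁sq : N₁^2 = ∑ j, (a j)^2 := by
    rw [hN₁, l2norm, Real.sq_sqrt (Finset.sum_nonneg fun j _ => sq_nonneg _)]
  have hN₂sq : N₂^2 = ∑ j, (b j)^2 := by
    rw [hN₂, l2norm, Real.sq_sqrt (Finset.sum_nonneg fun j _ => sq_nonneg _)]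
  have hN₁pos : 0 < N₁ := Real.sqrt_pos.mpr
    (Finset.sum_pos' (fun j _ => sq_nonneg _) ⟨j0, Finset.mem_univ _, pow_pos (hapos j0) 2⟩)
  have hN₂pos : 0 < N₂ := Real.sqrt_pos.mpr
    (Finset.sum_pos' (fun j _ => sq_nonneg _) ⟨j0, Finset.mem_univ _, pow_pos (hbpos j0) 2⟩)
  have hNrel : N₂^2 = N₁^2 - 2*δ*S₁ + δ^2*B := by
    rw [hN₂sq, hN₁sq]
    simp only [hS₁, hB, Finset.mul_sum, ← Finset.sum_sub_distrib, ← Finset.sum_add_distrib]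
    exact Finset.sum_congr rfl fun j _ => by simp only [ha, hb, hδ]; ring
  -- strict Cauchy–Schwarz
  set W : EuclideanSpace ℝ (Fin n) := (WithLp.equiv 2 (Fin n → ℝ)).symm w with hW
  set A : EuclideanSpace ℝ (Fin n) := (WithLp.equiv 2 (Fin n → ℝ)).symm a with hA
  have hWnorm : ‖W‖ = Real.sqrt B := by
    rw [EuclideanSpace.norm_eq, hB]
    congr 1
    exact Finset.sum_congr rfl fun j _ => by
      rw [show W j = w j from rfl, Real.norm_eq_abs, sq_abs]
  have hAnorm : ‖A‖ = N₁ := by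
    rw [EuclideanSpace.norm_eq, hN₁, l2norm]
    congr 1
    exact Finset.sum_congr rfl fun j _ => by
      rw [show A j = a j from rfl, Real.norm_eq_abs, sq_abs]
  have hWnormpos : 0 < ‖W‖ := by rw [hWnorm]; exact Real.sqrt_pos.mpr hBpos
  have hne : ‖A‖ • W ≠ ‖W‖ • A := by
    intro heq
    apply hxw (‖A‖ / ‖W‖ + γ₁)
    funext j
    have hj : (‖A‖ • W) j = (‖W‖ • A) j := by rw [heq]
    have hWj : (‖A‖ • W) j = ‖A‖ * w j := rfl
    have hAj : (‖W‖ • A) j = ‖W‖ * a j := rfl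
    rw [hWj, hAj] at hj
    have : a j = (‖A‖ / ‖W‖) * w j := by
      field_simp
      linarith [hj]
    simp only [Pi.smul_apply, smul_eq_mul]
    have haj : a j = x j - γ₁ * w j := rfl
    rw [haj] at this
    linarith [this]
  have hCS : S₁ < Real.sqrt B * N₁ := by
    have h := inner_lt_norm_mul_iff_real.mpr hne
    rw [hWnorm, hAnorm] at h
    have hin : @inner ℝ _ _ W A = S₁ := by
      rw [hS₁, PiLp.inner_apply]
      exact Finset.sum_congr rfl fun j _ => by
        rw [RCLike.inner_apply, show W j = w j from rfl, show A j = a j from rfl]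
        simp [starRingEnd_apply, mul_comm]
    rwa [hin] at h
  have hCSsq : S₁^2 < B * N₁^2 := by
    have h2 : (Real.sqrt B * N₁)^2 = B * N₁^2 := by
      rw [mul_pow, Real.sq_sqrt hBpos.le]
    nlinarith [hCS, hS₁pos]
  have key : 0 < δ * (S₁ + S₂) * (B * N₁^2 - S₁^2) :=
    mul_pos (mul_pos hδpos (add_pos hS₁pos hS₂pos)) (sub_pos.mpr hCSsq)
  have hid : (S₁*N₂)^2 - (S₂*N₁)^2 = δ * (S₁ + S₂) * (B * N₁^2 - S₁^2) := by
    linear_combination S₁^2 * hNrel + (δ*S₁^2 - N₁^2*S₁ - N₁^2*S₂) * hSrel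
  have hsq : (S₂*N₁)^2 < (S₁*N₂)^2 := by linarith
  have hfin : S₂ * N₁ < S₁ * N₂ :=
    lt_of_pow_lt_pow_left₀ 2 (mul_pos hS₁pos hN₂pos).le hsq
  rw [div_lt_div_iff₀ hN₂pos hN₁pos]
  exact hfin
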